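/- arXiv:1211.0459 — 3 statements merged into one kernel-verified Lean document; each statement's English description precedes it below -/
import Mathlib

section
/- Let A be a p×p matrix partitioned into blocks A_{gh} of sizes p_g × p_h where p_1 + ... + p_G = p. Let N(A) be the G×G matrix whose (g,h) entry is the spectral norm ‖A_{gh}‖. Then the spectral norm of A is at most the spectral norm of N(A): ‖A‖ ≤ ‖N(A)‖. -/
open scoped Matrix.Norms.L2Operator
open Matrix

/-- The `(g, h)` block of a matrix indexed by a sigma type encoding a
regular partition with block sizes `p 0, ..., p (G-1)`. -/
noncomputable def blockOf {G : ℕ} (p : Fin G → ℕ)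
    (A : Matrix ((g : Fin G) × Fin (p g)) ((g : Fin G) × Fin (p g)) ℝ)
    (g h : Fin G) : Matrix (Fin (p g)) (Fin (p h)) ℝ :=
  Matrix.of fun i j => A ⟨g, i⟩ ⟨h, j⟩

/-- Norm compression inequality: the spectral norm of a matrix is bounded by
the spectral norm of the matrix of spectral norms of its regular blocks. -/
theorem norm_compression_inequality {G : ℕ} (p : Fin G → ℕ)
    (A : Matrix ((g : Fin G) × Fin (p g)) ((g : Fin G) × Fin (p g)) ℝ) :
    ‖A‖ ≤ ‖(Matrix.of fun g h => ‖blockOf p A g h‖ : Matrix (Fin G) (Fin G) ℝ)‖ := by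
  classical
  set N : Matrix (Fin G) (Fin G) ℝ := Matrix.of fun g h => ‖blockOf p A g h‖ with hN
  rw [Matrix.l2_opNorm_def]
  refine ContinuousLinearMap.opNorm_le_bound _ (norm_nonneg N) fun x => ?_
  -- block components of x
  set xb : (g : Fin G) → EuclideanSpace ℝ (Fin (p g)) :=
    fun g => (WithLp.equiv 2 _).symm fun i => x ⟨g, i⟩ with hxb
  -- vector of block norms
  set ξ : EuclideanSpace ℝ (Fin G) := (WithLp.equiv 2 _).symm fun g => ‖xb g‖ with hξ
  set y : EuclideanSpace ℝ ((g : Fin G) × Fin (p g)) := Matrix.toEuclideanLin A x with hy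
  have hgoal : ‖(Matrix.toEuclideanLin.trans LinearMap.toContinuousLinearMap) A x‖ = ‖y‖ := rfl
  rw [hgoal]
  -- block components of y
  set yb : (g : Fin G) → EuclideanSpace ℝ (Fin (p g)) :=
    fun g => (WithLp.equiv 2 _).symm fun i => y ⟨g, i⟩ with hyb
  have hyapp : ∀ g, yb g =
      ∑ h, (WithLp.equiv 2 _).symm ((blockOf p A g h) *ᵥ (fun j => x ⟨h, j⟩)) := by
    intro g
    have hpi : (fun i => y ⟨g, i⟩)
        = ∑ h, ((blockOf p A g h) *ᵥ (fun j => x ⟨h, j⟩)) := by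
      funext i
      rw [Finset.sum_apply]
      show (A *ᵥ (fun k => x k)) ⟨g, i⟩ = _
      simp only [Matrix.mulVec, dotProduct, blockOf, Matrix.of_apply]
      rw [← Finset.univ_sigma_univ, Finset.sum_sigma]
    have h2 : yb g = (WithLp.linearEquiv 2 ℝ (Fin (p g) → ℝ)).symm
        (∑ h, ((blockOf p A g h) *ᵥ (fun j => x ⟨h, j⟩))) := by
      rw [← hpi]; rfl
    rw [h2, map_sum]
    rfl
  -- norm of each block of y bounded by row of N *ᵥ ξ
  have hblock : ∀ g, ‖yb g‖ ≤ ∑ h, ‖blockOf p A g h‖ * ‖xb h‖ := by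
    intro g
    rw [hyapp g]
    refine (norm_sum_le _ _).trans (Finset.sum_le_sum fun h _ => ?_)
    exact Matrix.l2_opNorm_mulVec (blockOf p A g h) (xb h)
  -- ‖ξ‖ = ‖x‖
  have hxnorm : ‖ξ‖ = ‖x‖ := by
    rw [EuclideanSpace.norm_eq, EuclideanSpace.norm_eq x,
      ← Finset.univ_sigma_univ, Finset.sum_sigma]
    congr 1
    refine Finset.sum_congr rfl fun g _ => ?_
    have : ‖ξ g‖ = ‖xb g‖ := by
      have h0 : ξ g = ‖xb g‖ := rfl
      rw [h0, Real.norm_eq_abs, abs_of_nonneg (norm_nonneg _)]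
    rw [this, EuclideanSpace.norm_eq (xb g), Real.sq_sqrt (by positivity)]
    rfl
  calc ‖y‖ = Real.sqrt (∑ g, ‖yb g‖ ^ 2) := by
        rw [EuclideanSpace.norm_eq, ← Finset.univ_sigma_univ, Finset.sum_sigma]
        congr 1
        refine Finset.sum_congr rfl fun g _ => ?_
        rw [EuclideanSpace.norm_eq (yb g), Real.sq_sqrt (by positivity)]
        rfl
    _ ≤ Real.sqrt (∑ g, ‖(N *ᵥ (fun h => ‖xb h‖)) g‖ ^ 2) := by
        refine Real.sqrt_le_sqrt (Finset.sum_le_sum fun g _ => ?_)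
        refine pow_le_pow_left₀ (norm_nonneg _) ?_ 2
        have h1 : (N *ᵥ (fun h => ‖xb h‖)) g = ∑ h, ‖blockOf p A g h‖ * ‖xb h‖ := by
          simp [Matrix.mulVec, dotProduct, hN]
        have h2 : (0:ℝ) ≤ ∑ h, ‖blockOf p A g h‖ * ‖xb h‖ :=
          Finset.sum_nonneg fun h _ => mul_nonneg (norm_nonneg _) (norm_nonneg _)
        rw [Real.norm_eq_abs, h1, abs_of_nonneg h2]
        exact hblock g
    _ = ‖(WithLp.equiv 2 (Fin G → ℝ)).symm (N *ᵥ (fun h => ‖xb h‖))‖ := by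
        rw [EuclideanSpace.norm_eq]; rfl
    _ ≤ ‖N‖ * ‖ξ‖ := Matrix.l2_opNorm_mulVec N ξ
    _ = ‖N‖ * ‖x‖ := by rw [hxnorm]
end

section
/- Let (Y1, Y2) be a bivariate Gaussian with mean zero, unit variances, and correlation ρ, and let S_{12} = (1/n) Σ_{i=1}^n Y1^{(i)} Y2^{(i)} be the sample covariance from n i.i.d. copies. Then for any x > 0, P(|S_{12} − ρ| ≥ x) ≤ 2 P(|W_n − n| ≥ n x), where W_n is a chi-squared random variable with n degrees of freedom. -/
open MeasureTheory ProbabilityTheory Real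
open scoped ENNReal NNReal

/-- The joint law of `n` i.i.d. standard Gaussians. -/
noncomputable def stdGaussianPi (n : ℕ) : Measure (Fin n → ℝ) :=
  Measure.pi fun _ => gaussianReal 0 1

/-- The centered bivariate Gaussian law with unit variances and correlation `ρ`. -/
noncomputable def biGaussian (ρ : ℝ) : Measure (Fin 2 → ℝ) :=
  (stdGaussianPi 2).map fun z => ![z 0, ρ * z 0 + Real.sqrt (1 - ρ ^ 2) * z 1]

/-- The chi-squared distribution with `n` degrees of freedom. -/
noncomputable def chiSquared (n : ℕ) : Measure ℝ :=
  (stdGaussianPi n).map fun z => ∑ i, (z i) ^ 2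

lemma gaussianPDFReal_rot {a b : ℝ} (hab : a^2 + b^2 = 1) (x y : ℝ) :
    gaussianPDFReal 0 1 (a*x+b*y) * gaussianPDFReal 0 1 (b*x-a*y)
      = gaussianPDFReal 0 1 x * gaussianPDFReal 0 1 y := by
  simp only [gaussianPDFReal, NNReal.coe_one, mul_one, sub_zero]
  rw [mul_mul_mul_comm, mul_mul_mul_comm ((Real.sqrt (2*π))⁻¹) (rexp _), ← Real.exp_add,
    ← Real.exp_add]
  rw [show (-(a*x+b*y)^2/2 + -(b*x-a*y)^2/2) = (-x^2/2 + -y^2/2) by nlinarith [hab]]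


local notation "P" => gaussianReal 0 1

lemma prod_gaussian_eq_withDensity :
    (P).prod P = (volume : Measure (ℝ×ℝ)).withDensity
      (fun p => gaussianPDF 0 1 p.1 * gaussianPDF 0 1 p.2) := by
  have hP : (P) = volume.withDensity (gaussianPDF 0 1) :=
    gaussianReal_of_var_ne_zero 0 one_ne_zero
  refine Measure.prod_eq fun s t hs ht => ?_
  rw [withDensity_apply _ (hs.prod ht), Measure.volume_eq_prod, ← Measure.prod_restrict,
    lintegral_prod_mul ((measurable_gaussianPDF 0 1).aemeasurable)
      ((measurable_gaussianPDF 0 1).aemeasurable)]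
  rw [hP, withDensity_apply _ hs, withDensity_apply _ ht]

noncomputable def rot (a b : ℝ) : ℝ × ℝ → ℝ × ℝ := fun p => (a*p.1 + b*p.2, b*p.1 - a*p.2)

lemma measurable_rot (a b : ℝ) : Measurable (rot a b) := by
  unfold rot; fun_prop

lemma map_rot_volume {a b : ℝ} (hab : a^2 + b^2 = 1) :
    (volume : Measure (ℝ×ℝ)).map (rot a b) = volume := by
  have hdet : LinearMap.det (Matrix.toLin (Module.Basis.finTwoProd ℝ) (Module.Basis.finTwoProd ℝ)
      !![a, b; b, -a]) = -1 := by
    rw [LinearMap.det_toLin, Matrix.det_fin_two_of]; nlinarith [hab]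
  have h := Measure.map_linearMap_addHaar_eq_smul_addHaar (μ := volume)
    (f := Matrix.toLin (Module.Basis.finTwoProd ℝ) (Module.Basis.finTwoProd ℝ) !![a, b; b, -a])
    (by rw [hdet]; norm_num)
  rw [hdet] at h
  have hfun : ⇑(Matrix.toLin (Module.Basis.finTwoProd ℝ) (Module.Basis.finTwoProd ℝ) !![a, b; b, -a])
      = rot a b := by
    funext p
    rw [Matrix.toLin_finTwoProd_apply]
    simp [rot, sub_eq_add_neg, neg_mul]
  rw [hfun, show ENNReal.ofReal |(-1:ℝ)⁻¹| = 1 by norm_num, one_smul] at h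
  exact h

lemma map_rot_gaussian {a b : ℝ} (hab : a^2 + b^2 = 1) :
    ((P).prod P).map (rot a b) = (P).prod P := by
  rw [prod_gaussian_eq_withDensity]
  set F : ℝ × ℝ → ℝ≥0∞ := fun p => gaussianPDF 0 1 p.1 * gaussianPDF 0 1 p.2 with hFdef
  have hF : Measurable F := by
    exact ((measurable_gaussianPDF 0 1).comp measurable_fst).mul
      ((measurable_gaussianPDF 0 1).comp measurable_snd)
  have hFT : ∀ p, F (rot a b p) = F p := by
    intro p
    simp only [hFdef, rot, gaussianPDF]
    rw [← ENNReal.ofReal_mul (gaussianPDFReal_nonneg _ _ _),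
      ← ENNReal.ofReal_mul (gaussianPDFReal_nonneg _ _ _),
      gaussianPDFReal_rot hab]
  ext s hs
  rw [Measure.map_apply (measurable_rot a b) hs, withDensity_apply _ ((measurable_rot a b) hs),
    withDensity_apply _ hs]
  calc ∫⁻ p in rot a b ⁻¹' s, F p ∂volume
      = ∫⁻ p in rot a b ⁻¹' s, F (rot a b p) ∂volume := by
        refine setLIntegral_congr_fun ((measurable_rot a b) hs) (fun p _ => ?_)
        rw [hFT]
    _ = ∫⁻ q in s, F q ∂(volume.map (rot a b)) :=
        (setLIntegral_map hs hF (measurable_rot a b)).symm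
    _ = ∫⁻ q in s, F q ∂volume := by rw [map_rot_volume hab]

lemma map_linear_gaussian {a b : ℝ} (hab : a^2 + b^2 = 1) :
    ((P).prod P).map (fun p : ℝ × ℝ => a * p.1 + b * p.2) = P := by
  have h : (fun p : ℝ × ℝ => a * p.1 + b * p.2) = Prod.fst ∘ rot a b := rfl
  rw [h, ← Measure.map_map measurable_fst (measurable_rot a b), map_rot_gaussian hab]
  simp

lemma stdGaussianPi_two_map {a b : ℝ} (hab : a^2 + b^2 = 1) :
    (stdGaussianPi 2).map (fun z => a * z 0 + b * z 1) = P := by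
  have h2 : MeasurePreserving (MeasurableEquiv.finTwoArrow (α := ℝ))
      (stdGaussianPi 2) ((P).prod P) := measurePreserving_finTwoArrow _
  have h : (fun z : Fin 2 → ℝ => a * z 0 + b * z 1)
      = (fun p : ℝ × ℝ => a * p.1 + b * p.2) ∘ (MeasurableEquiv.finTwoArrow (α := ℝ)) := rfl
  rw [h, ← Measure.map_map (by fun_prop) h2.measurable, h2.map_eq, map_linear_gaussian hab]

instance stdGaussianPi.instIsProbabilityMeasure (n : ℕ) :
    IsProbabilityMeasure (stdGaussianPi n) := by
  unfold stdGaussianPi; infer_instance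

lemma measurable_biGaussian_map (ρ : ℝ) :
    Measurable (fun z : Fin 2 → ℝ => ![z 0, ρ * z 0 + Real.sqrt (1 - ρ ^ 2) * z 1]) := by
  apply measurable_pi_lambda
  intro i
  fin_cases i <;> simp <;> fun_prop

lemma biGaussian_map_plus {ρ : ℝ} (hρl : -1 < ρ) (hρu : ρ < 1) :
    (biGaussian ρ).map (fun y : Fin 2 → ℝ => (y 0 + y 1) / Real.sqrt (2 * (1 + ρ)))
      = gaussianReal 0 1 := by
  set c := Real.sqrt (2 * (1 + ρ)) with hc
  have hcpos : 0 < c := Real.sqrt_pos.2 (by linarith)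
  have hc2 : c ^ 2 = 2 * (1 + ρ) := Real.sq_sqrt (by linarith)
  have hs2 : (Real.sqrt (1 - ρ ^ 2)) ^ 2 = 1 - ρ ^ 2 := Real.sq_sqrt (by nlinarith)
  rw [biGaussian, Measure.map_map (by fun_prop) (measurable_biGaussian_map ρ)]
  have hcomp : ((fun y : Fin 2 → ℝ => (y 0 + y 1) / c)
      ∘ (fun z : Fin 2 → ℝ => ![z 0, ρ * z 0 + Real.sqrt (1 - ρ ^ 2) * z 1]))
      = fun z : Fin 2 → ℝ => ((1 + ρ)/c) * z 0 + (Real.sqrt (1 - ρ ^ 2)/c) * z 1 := by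
    funext z
    simp only [Function.comp, Matrix.cons_val_zero, Matrix.cons_val_one, Matrix.head_cons]
    ring
  rw [hcomp]
  refine stdGaussianPi_two_map ?_
  rw [div_pow, div_pow, hc2, hs2, ← add_div, div_eq_one_iff_eq (by linarith)]
  ring

lemma biGaussian_map_minus {ρ : ℝ} (hρl : -1 < ρ) (hρu : ρ < 1) :
    (biGaussian ρ).map (fun y : Fin 2 → ℝ => (y 0 - y 1) / Real.sqrt (2 * (1 - ρ)))
      = gaussianReal 0 1 := by
  set c := Real.sqrt (2 * (1 - ρ)) with hc
  have hcpos : 0 < c := Real.sqrt_pos.2 (by linarith)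
  have hc2 : c ^ 2 = 2 * (1 - ρ) := Real.sq_sqrt (by linarith)
  have hs2 : (Real.sqrt (1 - ρ ^ 2)) ^ 2 = 1 - ρ ^ 2 := Real.sq_sqrt (by nlinarith)
  rw [biGaussian, Measure.map_map (by fun_prop) (measurable_biGaussian_map ρ)]
  have hcomp : ((fun y : Fin 2 → ℝ => (y 0 - y 1) / c)
      ∘ (fun z : Fin 2 → ℝ => ![z 0, ρ * z 0 + Real.sqrt (1 - ρ ^ 2) * z 1]))
      = fun z : Fin 2 → ℝ => ((1 - ρ)/c) * z 0 + (-(Real.sqrt (1 - ρ ^ 2)/c)) * z 1 := by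
    funext z
    simp only [Function.comp, Matrix.cons_val_zero, Matrix.cons_val_one, Matrix.head_cons]
    ring
  rw [hcomp]
  refine stdGaussianPi_two_map ?_
  rw [neg_sq, div_pow, div_pow, hc2, hs2, ← add_div, div_eq_one_iff_eq (by linarith)]
  ring

lemma pi_map_comp {n : ℕ} {α β : Type*} [MeasurableSpace α] [MeasurableSpace β]
    (μ : Measure α) [IsProbabilityMeasure μ] {f : α → β} (hf : Measurable f) :
    (Measure.pi fun _ : Fin n => μ).map (fun y i => f (y i))
      = Measure.pi fun _ : Fin n => μ.map f := by
  haveI : IsProbabilityMeasure (μ.map f) := Measure.isProbabilityMeasure_map hf.aemeasurable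
  refine (Measure.pi_eq fun s hs => ?_).symm
  have hmeas : Measurable fun (y : Fin n → α) (i : Fin n) => f (y i) :=
    measurable_pi_lambda _ fun i => hf.comp (measurable_pi_apply i)
  rw [Measure.map_apply hmeas (MeasurableSet.univ_pi hs)]
  have hpre : (fun (y : Fin n → α) (i : Fin n) => f (y i)) ⁻¹' Set.pi Set.univ s
      = Set.pi Set.univ fun i => f ⁻¹' s i := by
    ext y; simp [Set.mem_pi]
  rw [hpre, Measure.pi_pi]
  exact Finset.prod_congr rfl fun i _ => (Measure.map_apply hf (hs i)).symm

/-- Tail bound for the sample covariance of a bivariate Gaussian in terms of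
chi-squared tails: `P(|S₁₂ - ρ| ≥ x) ≤ 2 P(|Wₙ - n| ≥ n x)`. -/
theorem sample_covariance_tail {Ω : Type*} [MeasureSpace Ω]
    [IsProbabilityMeasure (ℙ : Measure Ω)]
    (n : ℕ) (hn : 0 < n) (ρ : ℝ) (hρl : -1 < ρ) (hρu : ρ < 1)
    (Y : Ω → Fin n → Fin 2 → ℝ) (hY : Measurable Y)
    (hlaw : Measure.map Y ℙ = Measure.pi fun _ : Fin n => biGaussian ρ)
    (x : ℝ) (hx : 0 < x) :
    ℙ {ω | x ≤ |(1 / n : ℝ) * ∑ i, Y ω i 0 * Y ω i 1 - ρ|}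
      ≤ 2 * chiSquared n {w | (n : ℝ) * x ≤ |w - n|} := by
  haveI : IsProbabilityMeasure (biGaussian ρ) := by
    rw [biGaussian]
    exact Measure.isProbabilityMeasure_map (measurable_biGaussian_map ρ).aemeasurable
  have hn' : (0 : ℝ) < n := Nat.cast_pos.2 hn
  set cp := Real.sqrt (2 * (1 + ρ)) with hcpdef
  set cm := Real.sqrt (2 * (1 - ρ)) with hcmdef
  have hcp2 : cp ^ 2 = 2 * (1 + ρ) := Real.sq_sqrt (by linarith)
  have hcm2 : cm ^ 2 = 2 * (1 - ρ) := Real.sq_sqrt (by linarith)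
  set U : (Fin 2 → ℝ) → ℝ := fun y => (y 0 + y 1) / cp with hUdef
  set V : (Fin 2 → ℝ) → ℝ := fun y => (y 0 - y 1) / cm with hVdef
  have hUm : Measurable U := ((measurable_pi_apply 0).add (measurable_pi_apply 1)).div_const _
  have hVm : Measurable V := ((measurable_pi_apply 0).sub (measurable_pi_apply 1)).div_const _
  set A : Ω → ℝ := fun ω => ∑ i, (U (Y ω i)) ^ 2 with hAdef
  set B : Ω → ℝ := fun ω => ∑ i, (V (Y ω i)) ^ 2 with hBdef
  have hYi : ∀ i : Fin n, Measurable fun ω => Y ω i :=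
    fun i => (measurable_pi_apply i).comp hY
  have hAm : Measurable A :=
    Finset.measurable_sum _ fun i _ => (hUm.comp (hYi i)).pow_const 2
  have hBm : Measurable B :=
    Finset.measurable_sum _ fun i _ => (hVm.comp (hYi i)).pow_const 2
  have hUvec : Measurable fun ω (i : Fin n) => U (Y ω i) :=
    measurable_pi_lambda _ fun i => hUm.comp (hYi i)
  have hVvec : Measurable fun ω (i : Fin n) => V (Y ω i) :=
    measurable_pi_lambda _ fun i => hVm.comp (hYi i)
  have hlawU : Measure.map (fun ω (i : Fin n) => U (Y ω i)) ℙ = stdGaussianPi n := by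
    have h : (fun ω (i : Fin n) => U (Y ω i)) = (fun y (i : Fin n) => U (y i)) ∘ Y := rfl
    have hg : Measurable fun (y : Fin n → Fin 2 → ℝ) (i : Fin n) => U (y i) :=
      measurable_pi_lambda _ fun i => hUm.comp (measurable_pi_apply i)
    rw [h, ← Measure.map_map hg hY, hlaw, pi_map_comp _ hUm, hUdef, hcpdef, biGaussian_map_plus hρl hρu]
    rfl
  have hlawV : Measure.map (fun ω (i : Fin n) => V (Y ω i)) ℙ = stdGaussianPi n := by
    have h : (fun ω (i : Fin n) => V (Y ω i)) = (fun y (i : Fin n) => V (y i)) ∘ Y := rfl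
    have hg : Measurable fun (y : Fin n → Fin 2 → ℝ) (i : Fin n) => V (y i) :=
      measurable_pi_lambda _ fun i => hVm.comp (measurable_pi_apply i)
    rw [h, ← Measure.map_map hg hY, hlaw, pi_map_comp _ hVm, hVdef, hcmdef, biGaussian_map_minus hρl hρu]
    rfl
  have hsummeas : Measurable fun z : Fin n → ℝ => ∑ i, (z i) ^ 2 :=
    Finset.measurable_sum _ fun i _ => (measurable_pi_apply i).pow_const 2
  have hmapA : Measure.map A ℙ = chiSquared n := by
    rw [chiSquared, ← hlawU, Measure.map_map hsummeas hUvec]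
    rfl
  have hmapB : Measure.map B ℙ = chiSquared n := by
    rw [chiSquared, ← hlawV, Measure.map_map hsummeas hVvec]
    rfl
  set S : Set ℝ := {w | (n : ℝ) * x ≤ |w - n|} with hSdef
  have hSm : MeasurableSet S :=
    measurableSet_le measurable_const ((measurable_id.sub measurable_const).abs)
  have hAeq : ℙ (A ⁻¹' S) = chiSquared n S := by
    rw [← hmapA, Measure.map_apply hAm hSm]
  have hBeq : ℙ (B ⁻¹' S) = chiSquared n S := by
    rw [← hmapB, Measure.map_apply hBm hSm]
  have h1ρ : (1 : ℝ) + ρ ≠ 0 := by linarith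
  have h2ρ : (1 : ℝ) - ρ ≠ 0 := by linarith
  have hsub : {ω | x ≤ |(1 / n : ℝ) * ∑ i, Y ω i 0 * Y ω i 1 - ρ|}
      ⊆ A ⁻¹' S ∪ B ⁻¹' S := by
    intro ω hω
    simp only [Set.mem_setOf_eq] at hω
    by_contra hcon
    simp only [Set.mem_union, Set.mem_preimage, hSdef, Set.mem_setOf_eq, not_or, not_le] at hcon
    obtain ⟨h1, h2⟩ := hcon
    have h1' := abs_lt.mp h1
    have h2' := abs_lt.mp h2
    have hkey : ∑ i, Y ω i 0 * Y ω i 1 = ((1 + ρ) * A ω - (1 - ρ) * B ω) / 2 := by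
      rw [hAdef, hBdef]
      simp only
      rw [Finset.mul_sum, Finset.mul_sum, ← Finset.sum_sub_distrib, Finset.sum_div]
      refine Finset.sum_congr rfl fun i _ => ?_
      simp only [hUdef, hVdef]
      rw [div_pow, div_pow, hcp2, hcm2]
      field_simp
      ring
    have hT : (1 / n : ℝ) * (∑ i, Y ω i 0 * Y ω i 1) - ρ
        = ((1 + ρ) * (A ω - n) - (1 - ρ) * (B ω - n)) / (2 * n) := by
      rw [hkey]
      field_simp
      ring
    rw [hT] at hω
    have hp1 : (1 + ρ) * (A ω - n) < (1 + ρ) * (n * x) :=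
      mul_lt_mul_of_pos_left h1'.2 (by linarith)
    have hp1' : (1 + ρ) * (-(n * x)) < (1 + ρ) * (A ω - n) :=
      mul_lt_mul_of_pos_left h1'.1 (by linarith)
    have hp2 : (1 - ρ) * (B ω - n) < (1 - ρ) * (n * x) :=
      mul_lt_mul_of_pos_left h2'.2 (by linarith)
    have hp2' : (1 - ρ) * (-(n * x)) < (1 - ρ) * (B ω - n) :=
      mul_lt_mul_of_pos_left h2'.1 (by linarith)
    have hsumeq : (1 + ρ) * (n * x) + (1 - ρ) * (n * x) = 2 * (n * x) := by ring
    have hsumeq' : (1 + ρ) * (-(n * x)) + (1 - ρ) * (-(n * x)) = -(2 * (n * x)) := by ring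
    rcases le_abs.mp hω with h | h
    · rw [le_div_iff₀ (by positivity)] at h
      nlinarith [h, hp1, hp2', hsumeq]
    · rw [← neg_div, le_div_iff₀ (by positivity)] at h
      nlinarith [h, hp1', hp2, hsumeq']
  calc ℙ {ω | x ≤ |(1 / n : ℝ) * ∑ i, Y ω i 0 * Y ω i 1 - ρ|}
      ≤ ℙ (A ⁻¹' S ∪ B ⁻¹' S) := measure_mono hsub
    _ ≤ ℙ (A ⁻¹' S) + ℙ (B ⁻¹' S) := measure_union_le _ _
    _ = 2 * chiSquared n S := by rw [hAeq, hBeq, two_mul]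
end

section
/- Let Σ be a symmetric p×p matrix satisfying max_j Σ_{i: |i−j| ≥ k} |σ_{ij}| ≤ M k^{−α} for all k ≥ 1. Let B = I × J be an index block such that |i − j| ≥ d for all (i,j) ∈ B. Then the spectral norm of the submatrix Σ_B = (σ_{ij})_{i∈I, j∈J} satisfies ‖Σ_B‖ ≤ M d^{−α}. -/
open scoped Matrix.Norms.L2Operator
set_option maxHeartbeats 1000000 in

lemma schur_test {m n : Type*} [Fintype m] [Fintype n] [DecidableEq m] [DecidableEq n]
    (A : Matrix m n ℝ) (C : ℝ) (hC : 0 ≤ C)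
    (hrow : ∀ i, ∑ j, |A i j| ≤ C) (hcol : ∀ j, ∑ i, |A i j| ≤ C) :
    ‖A‖ ≤ C := by
  rw [Matrix.l2_opNorm_def]
  refine ContinuousLinearMap.opNorm_le_bound _ hC fun x => ?_
  have key : ∑ i, (∑ j, A i j * x j) ^ 2 ≤ C ^ 2 * ∑ j, x j ^ 2 := by
    have step1 : ∀ i, (∑ j, A i j * x j) ^ 2 ≤
        (∑ j, |A i j|) * (∑ j, |A i j| * x j ^ 2) := by
      intro i
      have h1 : (∑ j, A i j * x j) ^ 2 ≤ (∑ j, |A i j * x j|) ^ 2 := by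
        rw [← sq_abs]
        exact pow_le_pow_left₀ (abs_nonneg _) (Finset.abs_sum_le_sum_abs _ _) 2
      refine h1.trans ?_
      have h2 := Finset.sum_mul_sq_le_sq_mul_sq Finset.univ
        (fun j => Real.sqrt |A i j|) (fun j => Real.sqrt |A i j| * |x j|)
      calc (∑ j, |A i j * x j|) ^ 2
          = (∑ j, Real.sqrt |A i j| * (Real.sqrt |A i j| * |x j|)) ^ 2 := by
            congr 1; refine Finset.sum_congr rfl fun j _ => ?_
            rw [← mul_assoc, Real.mul_self_sqrt (abs_nonneg _), abs_mul]
        _ ≤ (∑ j, Real.sqrt |A i j| ^ 2) * (∑ j, (Real.sqrt |A i j| * |x j|) ^ 2) := h2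
        _ = (∑ j, |A i j|) * (∑ j, |A i j| * x j ^ 2) := by
            congr 1
            · refine Finset.sum_congr rfl fun j _ => Real.sq_sqrt (abs_nonneg _)
            · refine Finset.sum_congr rfl fun j _ => ?_
              rw [mul_pow, Real.sq_sqrt (abs_nonneg _), sq_abs]
    have hinner : ∀ i, 0 ≤ ∑ j, |A i j| * x j ^ 2 := fun i =>
      Finset.sum_nonneg fun j _ => mul_nonneg (abs_nonneg _) (sq_nonneg _)
    calc ∑ i, (∑ j, A i j * x j) ^ 2
        ≤ ∑ i, (∑ j, |A i j|) * (∑ j, |A i j| * x j ^ 2) :=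
          Finset.sum_le_sum fun i _ => step1 i
      _ ≤ ∑ i, C * (∑ j, |A i j| * x j ^ 2) :=
          Finset.sum_le_sum fun i _ => mul_le_mul_of_nonneg_right (hrow i) (hinner i)
      _ = C * ∑ j, (∑ i, |A i j|) * x j ^ 2 := by
          rw [← Finset.mul_sum]; congr 1
          rw [Finset.sum_comm]
          refine Finset.sum_congr rfl fun j _ => ?_
          rw [Finset.sum_mul]
      _ ≤ C * ∑ j, C * x j ^ 2 := by
          refine mul_le_mul_of_nonneg_left (Finset.sum_le_sum fun j _ => ?_) hC
          exact mul_le_mul_of_nonneg_right (hcol j) (sq_nonneg _)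
      _ = C ^ 2 * ∑ j, x j ^ 2 := by rw [← Finset.mul_sum]; ring
  have hx : ‖x‖ = Real.sqrt (∑ j, x j ^ 2) := by
    rw [EuclideanSpace.norm_eq]
    congr 1; refine Finset.sum_congr rfl fun j _ => by rw [Real.norm_eq_abs, sq_abs]
  have hfx : ‖((Matrix.toEuclideanLin ≪≫ₗ LinearMap.toContinuousLinearMap) A) x‖
      = Real.sqrt (∑ i, (∑ j, A i j * x j) ^ 2) := by
    rw [EuclideanSpace.norm_eq]
    congr 1; refine Finset.sum_congr rfl fun i _ => ?_
    rw [Real.norm_eq_abs, sq_abs]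
    congr 1
  rw [hfx, hx]
  calc Real.sqrt (∑ i, (∑ j, A i j * x j) ^ 2)
      ≤ Real.sqrt (C ^ 2 * ∑ j, x j ^ 2) := Real.sqrt_le_sqrt key
    _ = C * Real.sqrt (∑ j, x j ^ 2) := by
        rw [Real.sqrt_mul (sq_nonneg _), Real.sqrt_sq hC]

/-- For a symmetric bandable matrix, a block whose index pairs are all at distance
at least `d` from the diagonal has spectral norm at most `M d^{-α}`. -/
theorem bandable_block_norm (p : ℕ) (M α : ℝ) (hM : 0 < M) (hα : 0 < α)
    (S : Matrix (Fin p) (Fin p) ℝ) (hsymm : S.IsSymm)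
    (hband : ∀ k : ℕ, 1 ≤ k → ∀ j : Fin p,
      ∑ i ∈ Finset.univ.filter (fun i : Fin p => k ≤ ((i : ℤ) - (j : ℤ)).natAbs),
        |S i j| ≤ M * (k : ℝ) ^ (-α))
    (I J : Finset (Fin p)) (d : ℕ) (hd : 1 ≤ d)
    (hdist : ∀ i ∈ I, ∀ j ∈ J, d ≤ ((i : ℤ) - (j : ℤ)).natAbs) :
    ‖(Matrix.of fun (i : I) (j : J) => S i j : Matrix I J ℝ)‖ ≤ M * (d : ℝ) ^ (-α) := by
  have hC : 0 ≤ M * (d : ℝ) ^ (-α) :=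
    mul_nonneg hM.le (Real.rpow_nonneg (Nat.cast_nonneg _) _)
  refine schur_test _ _ hC ?_ ?_
  · intro i
    have := hband d hd (i : Fin p)
    calc ∑ j : J, |S (i : Fin p) (j : Fin p)|
        = ∑ j ∈ J, |S (i : Fin p) j| := Finset.sum_coe_sort J (fun j => |S (i : Fin p) j|)
      _ = ∑ j ∈ J, |S j (i : Fin p)| := by
          refine Finset.sum_congr rfl fun j _ => ?_
          rw [hsymm.apply]
      _ ≤ ∑ j ∈ Finset.univ.filter
            (fun j : Fin p => d ≤ ((j : ℤ) - ((i : Fin p) : ℤ)).natAbs),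
            |S j (i : Fin p)| := by
          refine Finset.sum_le_sum_of_subset_of_nonneg ?_
            (fun _ _ _ => abs_nonneg _)
          intro j hj
          simp only [Finset.mem_filter, Finset.mem_univ, true_and]
          have := hdist i i.2 j hj
          omega
      _ ≤ M * (d : ℝ) ^ (-α) := this
  · intro j
    calc ∑ i : I, |S (i : Fin p) (j : Fin p)|
        = ∑ i ∈ I, |S i (j : Fin p)| := Finset.sum_coe_sort I (fun i => |S i (j : Fin p)|)
      _ ≤ ∑ i ∈ Finset.univ.filter
            (fun i : Fin p => d ≤ ((i : ℤ) - ((j : Fin p) : ℤ)).natAbs),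
            |S i (j : Fin p)| := by
          refine Finset.sum_le_sum_of_subset_of_nonneg ?_
            (fun _ _ _ => abs_nonneg _)
          intro i hi
          simp only [Finset.mem_filter, Finset.mem_univ, true_and]
          exact hdist i hi j j.2
      _ ≤ M * (d : ℝ) ^ (-α) := hband d hd (j : Fin p)
end
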